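/- Let g be the 6-dimensional real nilpotent Lie algebra with basis e_1,…,e_6 whose dual basis e^1,…,e^6 satisfies de^1 = de^2 = 0, de^3 = −e^1∧e^2, de^4 = e^1∧e^3, de^5 = e^1∧e^4 + e^2∧e^3, de^6 = e^2∧e^5 + e^3∧e^4, where d is the Chevalley–Eilenberg differential dα(x,y) = −α([x,y]). Then g admits a Ricci-flat metric which is not flat; explicitly, for any nonzero reals g_1, g_4, the symmetric bilinear form determined by ⟨e_1,e_3⟩ = g_1, ⟨e_2,e_2⟩ = −g_1, ⟨e_4,e_5⟩ = g_4, ⟨e_6,e_6⟩ = g_4²/g_1, with all other products of basis vectors equal to zero, is a nondegenerate Ricci-flat metric on g which is not flat. -/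

import Mathlib

open scoped BigOperators

namespace ArrowBreakingPaper

variable {ι : Type*} {g : Type*} [LieRing g] [LieAlgebra ℝ g]

/-- `⁅e i, e j⁆` is a nonzero multiple of `e k` (the arrow `e i →^{e j} e k`). -/
def Arrow (e : ι → g) (i j k : ι) : Prop :=
  ∃ c : ℝ, c ≠ 0 ∧ ⁅e i, e j⁆ = c • e k

/-- A basis is *nice* if each bracket of two basis vectors is a multiple of a single basis
vector, and for all `i`, `k` there is at most one `j` such that the `e k`-coefficient of
`⁅e i, e j⁆` is nonzero. -/
def IsNiceBasis (e : Module.Basis ι ℝ g) : Prop :=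
  (∀ i j : ι, ∃ (k : ι) (c : ℝ), ⁅e i, e j⁆ = c • e k) ∧
  (∀ i k j j' : ι, e.repr ⁅e i, e j⁆ k ≠ 0 → e.repr ⁅e i, e j'⁆ k ≠ 0 → j = j')

/-- An *arrow-breaking involution* of the (nice) basis `e`. -/
def IsArrowBreaking (e : ι → g) (σ : Equiv.Perm ι) : Prop :=
  (∀ i, σ (σ i) = i) ∧
  (∀ i j k, Arrow e i j k → ∀ l, ¬ Arrow e l (σ j) (σ k)) ∧
  (∀ i j k, Arrow e i j k → ∀ m, ¬ Arrow e (σ i) (σ j) m)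

/-- A `σ`-diagonal metric: `⟨e i, e (σ j)⟩ = gᵢ δᵢⱼ` with all `gᵢ ≠ 0` and `g_{σ i} = gᵢ`. -/
def IsSigmaDiagonal [DecidableEq ι] (e : Module.Basis ι ℝ g) (σ : Equiv.Perm ι)
    (B : LinearMap.BilinForm ℝ g) : Prop :=
  ∃ gv : ι → ℝ, (∀ i, gv i ≠ 0) ∧ (∀ i, gv (σ i) = gv i) ∧
    ∀ i j, B (e i) (e (σ j)) = if i = j then gv i else 0

/-- Symmetry of a bilinear form. -/
def IsSymm (B : LinearMap.BilinForm ℝ g) : Prop := ∀ x y : g, B x y = B y x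

/-- Nondegeneracy of a bilinear form. -/
def Nondeg (B : LinearMap.BilinForm ℝ g) : Prop :=
  ∀ v : g, (∀ w : g, B v w = 0) → v = 0

/-- The Gram matrix of a bilinear form in a basis. -/
noncomputable def gram [Fintype ι] (e : Module.Basis ι ℝ g) (B : LinearMap.BilinForm ℝ g) :
    Matrix ι ι ℝ := Matrix.of fun i j => B (e i) (e j)

/-- The Ricci curvature `ric(v,w) = ½⟨dv♭, dw♭⟩ − ½⟨ad v, ad w⟩` written in the
coordinates of a basis `e`, where `dα(x,y) = −α(⁅x,y⁆)` and the scalar products on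
`Λ²g*` and `g*⊗g` are induced by the dual metric (inverse Gram matrix). -/
noncomputable def ricci [Fintype ι] [DecidableEq ι] (e : Module.Basis ι ℝ g)
    (B : LinearMap.BilinForm ℝ g) (v w : g) : ℝ :=
  (1/2) * ((1/2) * ∑ i, ∑ j, ∑ k, ∑ l,
      (gram e B)⁻¹ i k * (gram e B)⁻¹ j l * (-(B v ⁅e i, e j⁆)) * (-(B w ⁅e k, e l⁆)))
  - (1/2) * ∑ i, ∑ j, (gram e B)⁻¹ i j * B ⁅v, e i⁆ ⁅w, e j⁆

/-- Ricci-flatness of a metric on a Lie algebra. -/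
def IsRicciFlat (B : LinearMap.BilinForm ℝ g) : Prop :=
  ∀ (m : ℕ) (e : Module.Basis (Fin m) ℝ g) (v w : g), ricci e B v w = 0

/-- The Koszul formula characterizing the Levi-Civita connection. -/
def IsLeviCivita (B : LinearMap.BilinForm ℝ g) (nab : g → g → g) : Prop :=
  ∀ u v w : g, 2 * B (nab u v) w = B ⁅u, v⁆ w - B ⁅v, w⁆ u + B ⁅w, u⁆ v

/-- The curvature `R(u,v)w = ∇_{⁅u,v⁆} w − ∇_u ∇_v w + ∇_v ∇_u w`. -/
def curv (nab : g → g → g) (u v w : g) : g :=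
  nab ⁅u, v⁆ w - nab u (nab v w) + nab v (nab u w)

/-- Flatness of a metric on a Lie algebra. -/
def IsFlat (B : LinearMap.BilinForm ℝ g) : Prop :=
  ∃ nab : g → g → g, IsLeviCivita B nab ∧ ∀ u v w : g, curv nab u v w = 0


section Invariance
open Matrix
section Aux
variable [Fintype ι] [DecidableEq ι]

lemma sum_mul_eq_trace (A N : Matrix ι ι ℝ) :
    ∑ i, ∑ j, A i j * N i j = (Aᵀ * N).trace := by
  simp only [Matrix.trace, Matrix.diag, Matrix.mul_apply, Matrix.transpose_apply]
  exact Finset.sum_comm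

noncomputable def fmat (e : Module.Basis ι ℝ g) (F : g →ₗ[ℝ] g →ₗ[ℝ] ℝ) : Matrix ι ι ℝ :=
  Matrix.of fun i j => F (e i) (e j)

lemma bilin_expand (e : Module.Basis ι ℝ g) (F : g →ₗ[ℝ] g →ₗ[ℝ] ℝ) (x y : g) :
    F x y = ∑ p, ∑ q, e.repr x p * e.repr y q * F (e p) (e q) := by
  conv_lhs => rw [← e.sum_repr x, ← e.sum_repr y]
  simp only [map_sum, _root_.map_smul, LinearMap.sum_apply, LinearMap.smul_apply, smul_eq_mul,
    Finset.mul_sum]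
  rw [Finset.sum_comm]
  exact Finset.sum_congr rfl fun p _ => Finset.sum_congr rfl fun q _ => by ring

lemma fmat_basis_change (e e' : Module.Basis ι ℝ g) (F : g →ₗ[ℝ] g →ₗ[ℝ] ℝ) :
    fmat e' F = (e.toMatrix e')ᵀ * fmat e F * e.toMatrix e' := by
  ext i j
  show F (e' i) (e' j) = _
  rw [bilin_expand e F (e' i) (e' j)]
  simp only [Matrix.mul_apply, Matrix.transpose_apply, Module.Basis.toMatrix_apply, fmat,
    Matrix.of_apply, Finset.sum_mul]
  rw [Finset.sum_comm]
  exact Finset.sum_congr rfl fun p _ => Finset.sum_congr rfl fun q _ => by ring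

noncomputable def contr (e : Module.Basis ι ℝ g) (B : LinearMap.BilinForm ℝ g)
    (F : g →ₗ[ℝ] g →ₗ[ℝ] ℝ) : ℝ :=
  ∑ i, ∑ j, (gram e B)⁻¹ i j * F (e i) (e j)

lemma gram_eq_fmat (e : Module.Basis ι ℝ g) (B : LinearMap.BilinForm ℝ g) :
    gram e B = fmat e B := rfl

lemma contr_invariant (e e' : Module.Basis ι ℝ g) (B : LinearMap.BilinForm ℝ g)
    (F : g →ₗ[ℝ] g →ₗ[ℝ] ℝ) :
    contr e' B F = contr e B F := by
  classical
  set P := e.toMatrix e' with hPdef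
  have : Invertible P := e.invertibleToMatrix e'
  have hPdet : IsUnit P.det := Matrix.isUnit_det_of_invertible P
  have hPTdet : IsUnit (Pᵀ).det := by rw [Matrix.det_transpose]; exact hPdet
  have h1 : gram e' B = Pᵀ * gram e B * P := fmat_basis_change e e' B
  unfold contr
  rw [show (∑ i, ∑ j, (gram e' B)⁻¹ i j * F (e' i) (e' j)) = ((gram e' B)⁻¹ᵀ * fmat e' F).trace from
      sum_mul_eq_trace _ _, show (∑ i, ∑ j, (gram e B)⁻¹ i j * F (e i) (e j)) =
      ((gram e B)⁻¹ᵀ * fmat e F).trace from sum_mul_eq_trace _ _]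
  show ((gram e' B)⁻¹ᵀ * fmat e' F).trace = ((gram e B)⁻¹ᵀ * fmat e F).trace
  rw [h1, fmat_basis_change e e' F]
  have e2 : ∀ A : Matrix ι ι ℝ, A⁻¹ᵀ = Aᵀ⁻¹ := fun A => Matrix.transpose_nonsing_inv A
  have e1 : (Pᵀ)⁻¹ᵀ = P⁻¹ := by rw [e2, Matrix.transpose_transpose]
  have hPPT : (Pᵀ)⁻¹ * Pᵀ = 1 := Matrix.nonsing_inv_mul Pᵀ hPTdet
  have hPPi : P * P⁻¹ = 1 := Matrix.mul_nonsing_inv P hPdet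
  rw [Matrix.mul_inv_rev, Matrix.mul_inv_rev, Matrix.transpose_mul, Matrix.transpose_mul, e1, e2]
  rw [e2 P, ← hPdef]
  have hmid : P⁻¹ * (gram e B)ᵀ⁻¹ * Pᵀ⁻¹ * (Pᵀ * fmat e F * P)
      = P⁻¹ * (gram e B)ᵀ⁻¹ * (fmat e F * P) := by
    rw [Matrix.mul_assoc (P⁻¹ * (gram e B)ᵀ⁻¹), ← Matrix.mul_assoc Pᵀ⁻¹ (Pᵀ * fmat e F) P,
      ← Matrix.mul_assoc Pᵀ⁻¹ Pᵀ (fmat e F), hPPT, one_mul]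
  rw [hmid, Matrix.trace_mul_comm]
  rw [Matrix.mul_assoc (fmat e F) P (P⁻¹ * (gram e B)ᵀ⁻¹),
    ← Matrix.mul_assoc P P⁻¹ ((gram e B)ᵀ⁻¹), hPPi, one_mul, Matrix.trace_mul_comm]


/-- The bilinear map `(y,t) ↦ (−B v ⁅x,y⁆)(−B w ⁅z,t⁆)`. -/
noncomputable def Kmap (B : LinearMap.BilinForm ℝ g) (v w x z : g) : g →ₗ[ℝ] g →ₗ[ℝ] ℝ :=
  LinearMap.mk₂ ℝ (fun y t => (-(B v ⁅x, y⁆)) * (-(B w ⁅z, t⁆)))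
    (fun y y' t => by simp only [lie_add, map_add, neg_add]; ring)
    (fun c y t => by simp only [lie_smul, _root_.map_smul, smul_eq_mul]; ring)
    (fun y t t' => by simp only [lie_add, map_add, neg_add, smul_eq_mul]; ring)
    (fun c y t => by simp only [lie_smul, _root_.map_smul, smul_eq_mul]; ring)

@[simp] lemma Kmap_apply (B : LinearMap.BilinForm ℝ g) (v w x z y t : g) :
    Kmap B v w x z y t = (-(B v ⁅x, y⁆)) * (-(B w ⁅z, t⁆)) := rfl

lemma contr_congr (e : Module.Basis ι ℝ g) (B : LinearMap.BilinForm ℝ g)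
    {F F' : g →ₗ[ℝ] g →ₗ[ℝ] ℝ} (h : ∀ x y, F x y = F' x y) : contr e B F = contr e B F' := by
  unfold contr
  exact Finset.sum_congr rfl fun i _ => Finset.sum_congr rfl fun j _ => by rw [h]

/-- The inner double contraction, as a bilinear map in the outer slots. -/
noncomputable def Phi (e : Module.Basis ι ℝ g) (B : LinearMap.BilinForm ℝ g) (v w : g) :
    g →ₗ[ℝ] g →ₗ[ℝ] ℝ :=
  LinearMap.mk₂ ℝ (fun x z => contr e B (Kmap B v w x z))
    (fun x x' z => by
      unfold contr
      rw [← Finset.sum_add_distrib]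
      refine Finset.sum_congr rfl fun i _ => ?_
      rw [← Finset.sum_add_distrib]
      refine Finset.sum_congr rfl fun j _ => ?_
      simp only [Kmap_apply, add_lie, map_add, neg_add]
      ring)
    (fun c x z => by
      unfold contr
      rw [smul_eq_mul, Finset.mul_sum]
      refine Finset.sum_congr rfl fun i _ => ?_
      rw [Finset.mul_sum]
      refine Finset.sum_congr rfl fun j _ => ?_
      simp only [Kmap_apply, smul_lie, _root_.map_smul, smul_eq_mul]
      ring)
    (fun x z z' => by
      unfold contr
      rw [← Finset.sum_add_distrib]
      refine Finset.sum_congr rfl fun i _ => ?_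
      rw [← Finset.sum_add_distrib]
      refine Finset.sum_congr rfl fun j _ => ?_
      simp only [Kmap_apply, add_lie, map_add, neg_add]
      ring)
    (fun c x z => by
      unfold contr
      rw [smul_eq_mul, Finset.mul_sum]
      refine Finset.sum_congr rfl fun i _ => ?_
      rw [Finset.mul_sum]
      refine Finset.sum_congr rfl fun j _ => ?_
      simp only [Kmap_apply, smul_lie, _root_.map_smul, smul_eq_mul]
      ring)

@[simp] lemma Phi_apply (e : Module.Basis ι ℝ g) (B : LinearMap.BilinForm ℝ g) (v w x z : g) :
    Phi e B v w x z = contr e B (Kmap B v w x z) := rfl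

/-- The `ad`-term, as a bilinear map. -/
noncomputable def F2 (B : LinearMap.BilinForm ℝ g) (v w : g) : g →ₗ[ℝ] g →ₗ[ℝ] ℝ :=
  LinearMap.mk₂ ℝ (fun x y => B ⁅v, x⁆ ⁅w, y⁆)
    (fun x x' y => by simp only [lie_add, map_add, LinearMap.add_apply])
    (fun c x y => by simp only [lie_smul, _root_.map_smul, LinearMap.smul_apply])
    (fun x y y' => by simp only [lie_add, map_add])
    (fun c x y => by simp only [lie_smul, _root_.map_smul])

@[simp] lemma F2_apply (B : LinearMap.BilinForm ℝ g) (v w x y : g) :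
    F2 B v w x y = B ⁅v, x⁆ ⁅w, y⁆ := rfl

end Aux

section RicFin
variable {m : ℕ}

noncomputable def ricci' (e : Module.Basis (Fin m) ℝ g)
    (B : LinearMap.BilinForm ℝ g) (v w : g) : ℝ :=
  (1/2) * ((1/2) * ∑ i, ∑ j, ∑ k, ∑ l,
      (gram e B)⁻¹ i k * (gram e B)⁻¹ j l * (-(B v ⁅e i, e j⁆)) * (-(B w ⁅e k, e l⁆)))
  - (1/2) * ∑ i, ∑ j, (gram e B)⁻¹ i j * B ⁅v, e i⁆ ⁅w, e j⁆

lemma ricci'_eq_contr (e : Module.Basis (Fin m) ℝ g) (B : LinearMap.BilinForm ℝ g) (v w : g) :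
    ricci' e B v w
      = (1/2) * ((1/2) * contr e B (Phi e B v w)) - (1/2) * contr e B (F2 B v w) := by
  unfold ricci'
  congr 1
  · congr 2
    unfold contr
    refine Finset.sum_congr rfl fun i _ => ?_
    rw [Finset.sum_comm]
    refine Finset.sum_congr rfl fun k _ => ?_
    rw [Phi_apply]
    unfold contr
    rw [Finset.mul_sum]
    refine Finset.sum_congr rfl fun j _ => ?_
    rw [Finset.mul_sum]
    refine Finset.sum_congr rfl fun l _ => ?_
    rw [Kmap_apply]
    ring

lemma ricci'_invariant (e e' : Module.Basis (Fin m) ℝ g) (B : LinearMap.BilinForm ℝ g) (v w : g) :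
    ricci' e' B v w = ricci' e B v w := by
  rw [ricci'_eq_contr, ricci'_eq_contr]
  have hPhi : ∀ x z, Phi e' B v w x z = Phi e B v w x z := by
    intro x z
    rw [Phi_apply, Phi_apply]
    exact contr_invariant e e' B (Kmap B v w x z)
  rw [contr_congr e' B hPhi, contr_invariant e e' B (Phi e B v w),
    contr_invariant e e' B (F2 B v w)]

end RicFin
end Invariance


section Computation
variable (e : Module.Basis (Fin 6) ℝ g)

/-- the metric coefficients -/
noncomputable def Mf (g₁ g₄ : ℝ) : Fin 6 → Fin 6 → ℝ := fun i j =>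
  if (i = 0 ∧ j = 2) ∨ (i = 2 ∧ j = 0) then g₁
  else if i = 1 ∧ j = 1 then -g₁
  else if (i = 3 ∧ j = 4) ∨ (i = 4 ∧ j = 3) then g₄
  else if i = 5 ∧ j = 5 then g₄ ^ 2 / g₁
  else 0

/-- the inverse metric coefficients -/
noncomputable def GinvF (g₁ g₄ : ℝ) : Fin 6 → Fin 6 → ℝ := fun i j =>
  if (i = 0 ∧ j = 2) ∨ (i = 2 ∧ j = 0) then 1 / g₁
  else if i = 1 ∧ j = 1 then -(1 / g₁)
  else if (i = 3 ∧ j = 4) ∨ (i = 4 ∧ j = 3) then 1 / g₄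
  else if i = 5 ∧ j = 5 then g₁ / g₄ ^ 2
  else 0

/-- an explicit bilinear form with prescribed Gram coefficients -/
noncomputable def mkB (M : Fin 6 → Fin 6 → ℝ) : LinearMap.BilinForm ℝ g :=
  LinearMap.mk₂ ℝ (fun x y => ∑ i, ∑ j, e.repr x i * e.repr y j * M i j)
    (fun x x' y => by
      simp only [map_add, Finsupp.coe_add, Pi.add_apply, add_mul]
      rw [← Finset.sum_add_distrib]
      exact Finset.sum_congr rfl fun i _ => by rw [← Finset.sum_add_distrib])
    (fun c x y => by
      simp only [map_smul, Finsupp.coe_smul, Pi.smul_apply, smul_eq_mul, Finset.mul_sum]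
      exact Finset.sum_congr rfl fun i _ =>
        Finset.sum_congr rfl fun j _ => by ring)
    (fun x y y' => by
      simp only [map_add, Finsupp.coe_add, Pi.add_apply, mul_add, add_mul]
      rw [← Finset.sum_add_distrib]
      exact Finset.sum_congr rfl fun i _ => by rw [← Finset.sum_add_distrib])
    (fun c x y => by
      simp only [map_smul, Finsupp.coe_smul, Pi.smul_apply, smul_eq_mul, Finset.mul_sum]
      exact Finset.sum_congr rfl fun i _ =>
        Finset.sum_congr rfl fun j _ => by ring)

lemma mkB_apply (M : Fin 6 → Fin 6 → ℝ) (x y : g) :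
    mkB e M x y = ∑ i, ∑ j, e.repr x i * e.repr y j * M i j := rfl

lemma mkB_basis (M : Fin 6 → Fin 6 → ℝ) (i j : Fin 6) :
    mkB e M (e i) (e j) = M i j := by
  rw [mkB_apply]
  simp [Module.Basis.repr_self, Finsupp.single_apply, ite_mul, zero_mul, one_mul,
    Finset.sum_ite_eq, Finset.mem_univ]

lemma mkB_symm (M : Fin 6 → Fin 6 → ℝ) (hM : ∀ i j, M i j = M j i) :
    IsSymm (mkB e M) := by
  intro x y
  rw [mkB_apply, mkB_apply, Finset.sum_comm]
  exact Finset.sum_congr rfl fun i _ => Finset.sum_congr rfl fun j _ => by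
    rw [hM j i]; ring

end Computation

set_option maxHeartbeats 4000000 in
/-- The Lie algebra `64321:5`, with structure equations
`de¹ = de² = 0`, `de³ = −e¹∧e²`, `de⁴ = e¹∧e³`, `de⁵ = e¹∧e⁴ + e²∧e³`,
`de⁶ = e²∧e⁵ + e³∧e⁴` (where `dα(x,y) = −α(⁅x,y⁆)`), admits a Ricci-flat nonflat metric;
explicitly, for nonzero `g₁, g₄`, the symmetric bilinear form with `⟨e₁,e₃⟩ = g₁`,
`⟨e₂,e₂⟩ = −g₁`, `⟨e₄,e₅⟩ = g₄`, `⟨e₆,e₆⟩ = g₄²/g₁` and all other products zero is a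
nondegenerate Ricci-flat metric which is not flat. -/
theorem statement17 {g : Type*} [LieRing g] [LieAlgebra ℝ g]
    (e : Module.Basis (Fin 6) ℝ g)
    -- `de¹ = 0` and `de² = 0`:
    (hd1 : ∀ x y : g, e.repr ⁅x, y⁆ 0 = 0)
    (hd2 : ∀ x y : g, e.repr ⁅x, y⁆ 1 = 0)
    -- `de³ = −e¹∧e²`, i.e. `−e³(⁅x,y⁆) = −(e¹(x)e²(y) − e¹(y)e²(x))`:
    (hd3 : ∀ x y : g, e.repr ⁅x, y⁆ 2 =
      e.repr x 0 * e.repr y 1 - e.repr y 0 * e.repr x 1)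
    -- `de⁴ = e¹∧e³`:
    (hd4 : ∀ x y : g, e.repr ⁅x, y⁆ 3 =
      -(e.repr x 0 * e.repr y 2 - e.repr y 0 * e.repr x 2))
    -- `de⁵ = e¹∧e⁴ + e²∧e³`:
    (hd5 : ∀ x y : g, e.repr ⁅x, y⁆ 4 =
      -((e.repr x 0 * e.repr y 3 - e.repr y 0 * e.repr x 3)
        + (e.repr x 1 * e.repr y 2 - e.repr y 1 * e.repr x 2)))
    -- `de⁶ = e²∧e⁵ + e³∧e⁴`:
    (hd6 : ∀ x y : g, e.repr ⁅x, y⁆ 5 =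
      -((e.repr x 1 * e.repr y 4 - e.repr y 1 * e.repr x 4)
        + (e.repr x 2 * e.repr y 3 - e.repr y 2 * e.repr x 3))) :
    (∃ B : LinearMap.BilinForm ℝ g, IsSymm B ∧ Nondeg B ∧ IsRicciFlat B ∧ ¬ IsFlat B) ∧
    ∀ (g₁ g₄ : ℝ), g₁ ≠ 0 → g₄ ≠ 0 →
      ∀ B : LinearMap.BilinForm ℝ g,
        (∀ i j : Fin 6, B (e i) (e j) =
          if (i = 0 ∧ j = 2) ∨ (i = 2 ∧ j = 0) then g₁
          else if i = 1 ∧ j = 1 then -g₁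
          else if (i = 3 ∧ j = 4) ∨ (i = 4 ∧ j = 3) then g₄
          else if i = 5 ∧ j = 5 then g₄ ^ 2 / g₁
          else 0) →
        Nondeg B ∧ IsRicciFlat B ∧ ¬ IsFlat B := by
  classical
  -- master bracket formula
  have hbrkt : ∀ x y : g, ⁅x, y⁆ =
      (e.repr x 0 * e.repr y 1 - e.repr y 0 * e.repr x 1) • e 2
      + (-(e.repr x 0 * e.repr y 2 - e.repr y 0 * e.repr x 2)) • e 3
      + (-((e.repr x 0 * e.repr y 3 - e.repr y 0 * e.repr x 3)
          + (e.repr x 1 * e.repr y 2 - e.repr y 1 * e.repr x 2))) • e 4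
      + (-((e.repr x 1 * e.repr y 4 - e.repr y 1 * e.repr x 4)
          + (e.repr x 2 * e.repr y 3 - e.repr y 2 * e.repr x 3))) • e 5 := by
    intro x y
    apply e.repr.injective
    ext k
    simp only [map_add, _root_.map_smul, Module.Basis.repr_self, Finsupp.coe_add, Finsupp.coe_smul,
      Pi.add_apply, Pi.smul_apply, Finsupp.single_apply, smul_eq_mul]
    fin_cases k <;>
      [skip; skip; skip; skip; skip; skip] <;>
      (norm_num [hd1 x y, hd2 x y, hd3 x y, hd4 x y, hd5 x y, hd6 x y];
       try simp (config := { decide := true });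
       try first | exact hd3 x y | linear_combination hd3 x y | linear_combination hd4 x y
                  | linear_combination hd5 x y | linear_combination hd6 x y)
  have key : ∀ (g₁ g₄ : ℝ), g₁ ≠ 0 → g₄ ≠ 0 → ∀ B : LinearMap.BilinForm ℝ g,
      (∀ i j : Fin 6, B (e i) (e j) = Mf g₁ g₄ i j) →
      Nondeg B ∧ IsRicciFlat B ∧ ¬ IsFlat B := by
    intro g₁ g₄ hg₁ hg₄ B hB
    have Bve : ∀ (v : g) (k : Fin 6), B v (e k) = ∑ p, e.repr v p * Mf g₁ g₄ p k := by
      intro v k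
      conv_lhs => rw [← e.sum_repr v]
      simp only [map_sum, _root_.map_smul, LinearMap.sum_apply, LinearMap.smul_apply,
        smul_eq_mul]
      exact Finset.sum_congr rfl fun p _ => by rw [hB]
    have Bev : ∀ (v : g) (k : Fin 6), B (e k) v = ∑ p, e.repr v p * Mf g₁ g₄ k p := by
      intro v k
      conv_lhs => rw [← e.sum_repr v]
      simp only [map_sum, _root_.map_smul, smul_eq_mul]
      exact Finset.sum_congr rfl fun p _ => by rw [hB]
    have hGram : gram e B = Matrix.of (Mf g₁ g₄) := by
      ext i j; exact hB i j
    have hmulGI : Matrix.of (Mf g₁ g₄) * Matrix.of (GinvF g₁ g₄) = 1 := by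
      ext i j
      fin_cases i <;> fin_cases j <;>
        (simp [Matrix.mul_apply, Fin.sum_univ_six, Mf, GinvF, Matrix.one_apply]; try field_simp)
    have hGinv : (gram e B)⁻¹ = Matrix.of (GinvF g₁ g₄) := by
      rw [hGram]; exact Matrix.inv_eq_right_inv hmulGI
    -- nondegeneracy
    have nd : Nondeg B := by
      intro v hv
      have hcoord : ∀ p : Fin 6, e.repr v p = 0 := by
        have h0 := hv (e 0); have h1 := hv (e 1); have h2 := hv (e 2)
        have h3 := hv (e 3); have h4 := hv (e 4); have h5 := hv (e 5)
        rw [Bve] at h0 h1 h2 h3 h4 h5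
        simp only [Fin.sum_univ_six] at h0 h1 h2 h3 h4 h5
        norm_num [Mf] at h0 h1 h2 h3 h4 h5
        have hq : g₄ ^ 2 / g₁ ≠ 0 := div_ne_zero (pow_ne_zero 2 hg₄) hg₁
        intro p
        fin_cases p
        · simpa [hg₁] using h2
        · simpa [hg₁] using h1
        · simpa [hg₁] using h0
        · simpa [hg₄] using h4
        · simpa [hg₄] using h3
        · simpa [hq] using h5
      have : e.repr v = 0 := Finsupp.ext hcoord
      exact (LinearEquiv.map_eq_zero_iff e.repr).mp this
    refine ⟨nd, ?_, ?_⟩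
    · -- Ricci-flatness
      intro m e' v w
      have hm : m = 6 := by
        have h1 := Module.finrank_eq_card_basis e
        have h2 := Module.finrank_eq_card_basis e'
        rw [h1] at h2
        simpa using h2.symm
      subst hm
      have hre : ricci e' B v w = ricci' e' B v w := rfl
      rw [hre, ricci'_invariant e e' B v w]
      unfold ricci'
      rw [hGinv]
      simp only [Fin.sum_univ_six, Matrix.of_apply, GinvF]
      simp (config := { decide := true }) only [if_true, if_false, and_self, and_true, true_and,
        Fin.isValue, zero_mul, mul_zero, neg_zero, zero_add, add_zero, zero_sub, sub_zero, neg_neg]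
      simp only [hbrkt, Module.Basis.repr_self, Finsupp.single_apply]
      simp (config := { decide := true }) [map_add, _root_.map_smul, map_neg, map_sub,
        LinearMap.add_apply, LinearMap.smul_apply, LinearMap.neg_apply, LinearMap.sub_apply,
        smul_eq_mul, Bve, Fin.sum_univ_six, Mf]
      field_simp
      ring
    · -- not flat
      rintro ⟨nab, hLC, hcurv⟩
      have hb01 : ⁅e 0, e 1⁆ = e 2 := by
        rw [hbrkt]
        simp (config := { decide := true }) [Module.Basis.repr_self, Finsupp.single_apply]
      have ext0 : ∀ x : g, (∀ k : Fin 6, B x (e k) = 0) → x = 0 := by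
        intro x hx
        refine nd x fun w => ?_
        have : B x w = ∑ k, e.repr w k * B x (e k) := by
          conv_lhs => rw [← e.sum_repr w]
          simp only [map_sum, _root_.map_smul, smul_eq_mul]
        rw [this]
        simp [hx]
      have nabval : ∀ u v x : g,
          (∀ k : Fin 6, 2 * B x (e k) = B ⁅u, v⁆ (e k) - B ⁅v, e k⁆ u + B ⁅e k, u⁆ v) →
          nab u v = x := by
        intro u v x hx
        have hz : ∀ k : Fin 6, B (nab u v - x) (e k) = 0 := by
          intro k
          have h1 := hLC u v (e k)
          have h2 := hx k
          have h3 : B (nab u v) (e k) = B x (e k) := by linarith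
          simp [map_sub, LinearMap.sub_apply, h3]
        have := ext0 _ hz
        exact sub_eq_zero.mp this
      have n1 : nab (e 1) (e 0) = 0 := by
        refine nabval _ _ _ fun k => ?_
        fin_cases k <;>
          simp (config := { decide := true }) [hbrkt, Module.Basis.repr_self, Finsupp.single_apply,
            map_add, _root_.map_smul, map_neg, map_sub, LinearMap.add_apply,
            LinearMap.smul_apply, LinearMap.neg_apply, LinearMap.sub_apply, smul_eq_mul,
            hB, Mf] <;> ring
      have n2 : nab (e 0) (e 0) = e 1 := by
        refine nabval _ _ _ fun k => ?_
        fin_cases k <;>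
          simp (config := { decide := true }) [hbrkt, Module.Basis.repr_self, Finsupp.single_apply,
            map_add, _root_.map_smul, map_neg, map_sub, LinearMap.add_apply,
            LinearMap.smul_apply, LinearMap.neg_apply, LinearMap.sub_apply, smul_eq_mul,
            hB, Mf] <;> ring
      have n3 : nab (e 1) (e 1) = 0 := by
        refine nabval _ _ _ fun k => ?_
        fin_cases k <;>
          simp (config := { decide := true }) [hbrkt, Module.Basis.repr_self, Finsupp.single_apply,
            map_add, _root_.map_smul, map_neg, map_sub, LinearMap.add_apply,
            LinearMap.smul_apply, LinearMap.neg_apply, LinearMap.sub_apply, smul_eq_mul,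
            hB, Mf] <;> ring
      have n4 : nab (e 2) (e 0) = (1/2 : ℝ) • e 3 := by
        refine nabval _ _ _ fun k => ?_
        fin_cases k <;>
          simp (config := { decide := true }) [hbrkt, Module.Basis.repr_self, Finsupp.single_apply,
            map_add, _root_.map_smul, map_neg, map_sub, LinearMap.add_apply,
            LinearMap.smul_apply, LinearMap.neg_apply, LinearMap.sub_apply, smul_eq_mul,
            hB, Mf] <;> ring
      have n5 : nab (e 0) 0 = 0 := by
        refine nabval _ _ _ fun k => ?_
        fin_cases k <;>
          simp (config := { decide := true }) [hbrkt, Module.Basis.repr_self, Finsupp.single_apply,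
            map_add, _root_.map_smul, map_neg, map_sub, LinearMap.add_apply,
            LinearMap.smul_apply, LinearMap.neg_apply, LinearMap.sub_apply, smul_eq_mul,
            hB, Mf] <;> ring
      have hc := hcurv (e 0) (e 1) (e 0)
      unfold curv at hc
      rw [hb01, n1, n2, n4, n5, n3] at hc
      rw [sub_zero, add_zero] at hc
      have h3 : (e 3 : g) ≠ 0 := e.ne_zero 3
      rcases smul_eq_zero.mp hc with h | h
      · norm_num at h
      · exact h3 h
  constructor
  · -- existence
    have hsym : ∀ i j : Fin 6, Mf 1 1 i j = Mf 1 1 j i := by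
      intro i j
      fin_cases i <;> fin_cases j <;> simp (config := { decide := true }) [Mf]
    obtain ⟨hn, hr, hf⟩ := key 1 1 one_ne_zero one_ne_zero (mkB e (Mf 1 1))
      (fun i j => mkB_basis e (Mf 1 1) i j)
    exact ⟨mkB e (Mf 1 1), mkB_symm e (Mf 1 1) hsym, hn, hr, hf⟩
  · intro g₁ g₄ hg₁ hg₄ B hB
    exact key g₁ g₄ hg₁ hg₄ B hB

end ArrowBreakingPaper
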